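/- Let (ρ_k) be a nondecreasing sequence of positive reals defined by the rule: ρ_{k+1} = ρ_k + δ if r_k > η and ρ_{k+1} = ρ_k otherwise, where δ > 0, η > 0, and r_k = C/ρ_{k-1} for some constant C > 0. Then there exists k̄ ∈ ℕ such that r_k ≤ η for all k ≥ k̄, and ρ_k = ρ_{k̄} for all k ≥ k̄. -/
import Mathlib


/-- The adaptive penalty rule eventually freezes and the residual falls below the
threshold. -/
theorem penalty_freezes (ρ r : ℕ → ℝ) (δ η C : ℝ) (hδ : 0 < δ) (hη : 0 < η)
    (hC : 0 < C) (hρ0 : 0 < ρ 0)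
    (hr : ∀ k, r (k + 1) = C / ρ k)
    (hrule : ∀ k, ρ (k + 1) = if η < r k then ρ k + δ else ρ k) :
    ∃ kbar : ℕ, (∀ k ≥ kbar, r k ≤ η) ∧ ∀ k ≥ kbar, ρ k = ρ kbar := by
  have hmono : Monotone ρ := monotone_nat_of_le_succ (fun k => by
    rw [hrule k]; split <;> linarith)
  have hpos : ∀ k, 0 < ρ k := fun k => lt_of_lt_of_le hρ0 (hmono (Nat.zero_le k))
  by_cases h : ∃ k, 1 ≤ k ∧ r k ≤ η
  · obtain ⟨k0, hk01, hk0⟩ := h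
    -- r k0 = C / ρ (k0 - 1) ≤ η, and ρ k0 ≥ ρ (k0-1), so C / ρ k0 ≤ η
    obtain ⟨m, rfl⟩ := Nat.exists_eq_add_of_le hk01
    have hrm : C / ρ m ≤ η := by rw [← hr m, show m + 1 = 1 + m from Nat.add_comm m 1]; exact hk0
    have hCρ : C / ρ (1 + m) ≤ η := by
      calc C / ρ (1 + m) ≤ C / ρ m := by
            gcongr
            · exact hpos m
            · exact hmono (Nat.le_add_left m 1)
        _ ≤ η := hrm
    have key : ∀ n, r (1 + m + n) ≤ η ∧ ρ (1 + m + n) = ρ (1 + m) := by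
      intro n
      induction n with
      | zero => exact ⟨hk0, rfl⟩
      | succ n ih =>
        obtain ⟨hr1, hρ1⟩ := ih
        have hfreeze : ρ (1 + m + n + 1) = ρ (1 + m + n) := by
          rw [hrule]; simp [not_lt.2 hr1]
        refine ⟨?_, by rw [show 1 + m + (n + 1) = 1 + m + n + 1 from rfl, hfreeze, hρ1]⟩
        rw [show 1 + m + (n + 1) = (1 + m + n) + 1 from rfl, hr, hρ1]
        exact hCρ
    refine ⟨1 + m, ?_, ?_⟩
    · intro k hk
      obtain ⟨n, rfl⟩ := Nat.exists_eq_add_of_le hk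
      exact (key n).1
    · intro k hk
      obtain ⟨n, rfl⟩ := Nat.exists_eq_add_of_le hk
      exact (key n).2
  · exfalso
    push_neg at h
    -- ρ grows by δ each step from index 1 on
    have hstep : ∀ n, ρ (n + 2) = ρ (n + 1) + δ := by
      intro n
      rw [hrule (n + 1), if_pos (h (n + 1) (Nat.le_add_left 1 n))]
    have hgrow : ∀ n : ℕ, ρ 1 + n * δ ≤ ρ (n + 1) := by
      intro n
      induction n with
      | zero => simp
      | succ n ih =>
        rw [show n + 1 + 1 = n + 2 from rfl, hstep n]
        push_cast
        linarith
    have hbound : ∀ n, ρ n < C / η := by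
      intro n
      have hk := h (n + 1) (Nat.le_add_left 1 n)
      rw [hr n, lt_div_iff₀ (hpos n)] at hk
      rw [lt_div_iff₀ hη]
      linarith [mul_comm η (ρ n)]
    obtain ⟨n, hn⟩ := exists_nat_gt ((C / η - ρ 1) / δ)
    have h1 := hgrow n
    have h2 := hbound (n + 1)
    rw [div_lt_iff₀ hδ] at hn
    linarith
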